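/- Let ℓ be an odd prime and ℒ^r Kummer's differential logarithms on ℤ[ζ_ℓ]. If α ∈ ℝ ∩ ℤ[ζ_ℓ] is real (fixed by complex conjugation) and α ≡ 1 mod (1 − ζ_ℓ), then ℒ^r(α) ≡ 0 (mod ℓ) for every odd r with 1 ≤ r ≤ ℓ − 2. In particular ℒ^r(ε) = 0 for every real unit ε ≡ 1 mod (1−ζ_ℓ). -/

import Mathlib

open PowerSeries

/-- Kummer's differential logarithm: for a polynomial `f ∈ ℤ[X]` (representing
`α = f(ζ)`), `kummerL f r` is the `r`-th derivative of `log f(e^v)` at `v = 0`, computed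
formally as `(r−1)! · coeff_{r−1} (g'/g)` where `g = f(e^v) ∈ ℚ⟦v⟧`. -/
noncomputable def kummerL (f : Polynomial ℤ) (r : ℕ) : ℚ :=
  ((r - 1).factorial : ℚ) *
    PowerSeries.coeff (R := ℚ) (r - 1)
      (PowerSeries.derivative ℚ (Polynomial.eval₂ (Int.castRingHom (PowerSeries ℚ))
          (PowerSeries.exp ℚ) f) *
        (Polynomial.eval₂ (Int.castRingHom (PowerSeries ℚ)) (PowerSeries.exp ℚ) f)⁻¹)

/-- `x ≡ 0 (mod ℓ)` for a rational number `x`, in the `ℓ`-adic sense. -/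
def RatModCong (ℓ : ℕ) (x : ℚ) : Prop :=
  ∃ a b : ℤ, ¬ (ℓ : ℤ) ∣ b ∧ (b : ℚ) * x = (ℓ : ℚ) * a

namespace KummerAux

open IsUltrametricDist

variable {ℓ : ℕ} [hF : Fact ℓ.Prime]

lemma norm_intQ_le_one (m : ℤ) : ‖((m : ℚ) : ℚ_[ℓ])‖ ≤ 1 := by
  rw [Rat.cast_intCast]; exact Padic.norm_int_le_one m

lemma norm_intQ_eq_one {m : ℤ} (h : ¬ (ℓ : ℤ) ∣ m) : ‖((m : ℚ) : ℚ_[ℓ])‖ = 1 := by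
  rw [Rat.cast_intCast]
  have h1 := Padic.norm_int_le_one (p := ℓ) m
  have h2 := (Padic.norm_intCast_lt_one_iff (p := ℓ) (k := m)).not.2 h
  push_neg at h2
  exact le_antisymm h1 h2

lemma norm_natQ_le_one (m : ℕ) : ‖((m : ℚ) : ℚ_[ℓ])‖ ≤ 1 := by
  have := norm_intQ_le_one (ℓ := ℓ) (m : ℤ); push_cast at this ⊢; exact this

lemma norm_factQ_eq_one {n : ℕ} (h : n < ℓ) : ‖((n.factorial : ℕ) : ℚ_[ℓ])‖ = 1 := by
  have : ¬ (ℓ : ℤ) ∣ (n.factorial : ℤ) := by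
    rw [Int.natCast_dvd_natCast]
    intro hd
    exact absurd ((Nat.Prime.dvd_factorial hF.out).1 hd) (by omega)
  have := norm_intQ_eq_one (ℓ := ℓ) this
  push_cast at this ⊢
  exact this

lemma norm_intQ_le_inv {m : ℤ} (h : (ℓ : ℤ) ∣ m) : ‖((m : ℚ) : ℚ_[ℓ])‖ ≤ (ℓ : ℝ)⁻¹ := by
  obtain ⟨k, rfl⟩ := h
  have : (((((ℓ : ℤ) * k : ℤ) : ℚ)) : ℚ_[ℓ]) = (ℓ : ℚ_[ℓ]) * ((k : ℚ) : ℚ_[ℓ]) := by push_cast; ring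
  rw [this, norm_mul, Padic.norm_p]
  calc (ℓ : ℝ)⁻¹ * ‖((k : ℚ) : ℚ_[ℓ])‖ ≤ (ℓ : ℝ)⁻¹ * 1 := by
        refine mul_le_mul_of_nonneg_left (norm_intQ_le_one k) (by positivity)
    _ = (ℓ : ℝ)⁻¹ := mul_one _

/-- All coefficients of `A` up to index `N` have `ℓ`-adic norm at most `c`. -/
def Bd (ℓ : ℕ) [Fact ℓ.Prime] (c : ℝ) (N : ℕ) (A : PowerSeries ℚ) : Prop :=
  ∀ n ≤ N, ‖((PowerSeries.coeff n A : ℚ) : ℚ_[ℓ])‖ ≤ c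

lemma Bd.mono {c d : ℝ} {N M : ℕ} {A : PowerSeries ℚ} (h : Bd ℓ c N A) (hcd : c ≤ d)
    (hMN : M ≤ N) : Bd ℓ d M A :=
  fun n hn => le_trans (h n (le_trans hn hMN)) hcd

lemma Bd.add {c : ℝ} {N : ℕ} {A B : PowerSeries ℚ} (hA : Bd ℓ c N A) (hB : Bd ℓ c N B) :
    Bd ℓ c N (A + B) := by
  intro n hn
  rw [map_add]
  push_cast
  exact le_trans (Padic.nonarchimedean _ _) (max_le (hA n hn) (hB n hn))

lemma Bd.neg {c : ℝ} {N : ℕ} {A : PowerSeries ℚ} (hA : Bd ℓ c N A) : Bd ℓ c N (-A) := by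
  intro n hn
  rw [map_neg]
  push_cast
  rw [norm_neg]
  exact hA n hn

lemma Bd.sub {c : ℝ} {N : ℕ} {A B : PowerSeries ℚ} (hA : Bd ℓ c N A) (hB : Bd ℓ c N B) :
    Bd ℓ c N (A - B) := by
  rw [sub_eq_add_neg]; exact hA.add hB.neg

lemma Bd.mul {c d : ℝ} {N : ℕ} {A B : PowerSeries ℚ} (hd : 0 ≤ d)
    (hA : Bd ℓ c N A) (hB : Bd ℓ d N B) : Bd ℓ (c * d) N (A * B) := by
  have hc : 0 ≤ c := le_trans (norm_nonneg _) (hA 0 (Nat.zero_le _))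
  intro n hn
  rw [PowerSeries.coeff_mul]
  push_cast
  refine norm_sum_le_of_forall_le_of_nonneg (by positivity) ?_
  rintro ⟨i, j⟩ hij
  rw [Finset.HasAntidiagonal.mem_antidiagonal] at hij
  rw [norm_mul]
  exact mul_le_mul (hA i (le_trans (by omega) hn)) (hB j (le_trans (by omega) hn))
    (norm_nonneg _) hc

lemma Bd_exp {N : ℕ} (hN : N < ℓ) : Bd ℓ 1 N (PowerSeries.exp ℚ) := by
  intro n hn
  rw [PowerSeries.coeff_exp]
  have : (algebraMap ℚ ℚ) (1 / n.factorial : ℚ) = (1 / n.factorial : ℚ) := by simp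
  rw [this, one_div]
  push_cast
  rw [norm_inv, norm_factQ_eq_one (ℓ := ℓ) (n := n) (by omega)]
  norm_num

lemma Bd_intCast (a : ℤ) (N : ℕ) : Bd ℓ 1 N ((Int.castRingHom (PowerSeries ℚ)) a) := by
  intro n hn
  have : (Int.castRingHom (PowerSeries ℚ)) a = PowerSeries.C ((a : ℚ)) := by
    simp [map_intCast]
  rw [this, PowerSeries.coeff_C]
  split_ifs
  · exact norm_intQ_le_one a
  · simp

lemma Bd_eval (p : Polynomial ℤ) {N : ℕ} (hN : N < ℓ) :
    Bd ℓ 1 N (p.eval₂ (Int.castRingHom (PowerSeries ℚ)) (PowerSeries.exp ℚ)) := by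
  induction p using Polynomial.induction_on with
  | C a => rw [Polynomial.eval₂_C]; exact Bd_intCast a N
  | add p q hp hq => rw [Polynomial.eval₂_add]; exact hp.add hq
  | monomial m a ih =>
      have : Polynomial.C a * Polynomial.X ^ (m + 1) =
          (Polynomial.C a * Polynomial.X ^ m) * Polynomial.X := by ring
      rw [this, Polynomial.eval₂_mul, Polynomial.eval₂_X]
      have := ih.mul (d := 1) zero_le_one (Bd_exp hN)
      rwa [mul_one] at this

lemma Bd_deriv {c : ℝ} {N : ℕ} {A : PowerSeries ℚ} (hA : Bd ℓ c (N + 1) A) :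
    Bd ℓ c N (PowerSeries.derivative ℚ A) := by
  have hc : 0 ≤ c := le_trans (norm_nonneg _) (hA 0 (Nat.zero_le _))
  intro n hn
  rw [PowerSeries.coeff_derivative]
  push_cast
  rw [norm_mul]
  calc ‖((PowerSeries.coeff (n+1) A : ℚ) : ℚ_[ℓ])‖ * ‖((n : ℚ_[ℓ]) + 1)‖
      ≤ c * 1 := by
        refine mul_le_mul (hA (n+1) (by omega)) ?_ (norm_nonneg _) hc
        have := norm_natQ_le_one (ℓ := ℓ) (n + 1)
        push_cast at this
        exact this
    _ = c := mul_one c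

lemma Bd_inv {N : ℕ} {A : PowerSeries ℚ} (hA : Bd ℓ 1 N A)
    (h0 : ‖((PowerSeries.constantCoeff A : ℚ) : ℚ_[ℓ])‖ = 1) : Bd ℓ 1 N A⁻¹ := by
  intro n
  induction n using Nat.strong_induction_on with
  | _ n ih =>
    intro hn
    rw [PowerSeries.coeff_inv]
    split_ifs with h
    · push_cast
      rw [norm_inv, h0]
      norm_num
    · push_cast
      rw [neg_mul, norm_neg, norm_mul, norm_inv, h0, inv_one, one_mul]
      refine norm_sum_le_of_forall_le_of_nonneg zero_le_one ?_
      rintro ⟨i, j⟩ hij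
      rw [Finset.HasAntidiagonal.mem_antidiagonal] at hij
      rw [apply_ite (fun x : ℚ => ((x : ℚ_[ℓ])))]
      split_ifs with hj
      · push_cast
        rw [norm_mul]
        calc _ ≤ 1 * 1 := mul_le_mul (hA i (by omega)) (ih j (by omega) (by omega))
                (norm_nonneg _) zero_le_one
          _ = 1 := mul_one 1
      · simp



-- power sums divisibility
lemma dvd_power_sum {n : ℕ} (hn : n ≤ ℓ - 2) :
    (ℓ : ℤ) ∣ ∑ i ∈ Finset.range ℓ, (i : ℤ) ^ n := by
  have hℓ2 : 2 ≤ ℓ := hF.out.two_le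
  rcases Nat.eq_zero_or_pos n with h0 | hpos
  · subst h0
    simp
  · rw [← ZMod.intCast_zmod_eq_zero_iff_dvd]
    push_cast
    have e1 : ∑ i ∈ Finset.range ℓ, ((i : ZMod ℓ)) ^ n = ∑ x : ZMod ℓ, x ^ n := by
      refine Finset.sum_nbij' (fun i => (i : ZMod ℓ)) (fun x => x.val) ?_ ?_ ?_ ?_ ?_
      · intro a _; exact Finset.mem_univ _
      · intro a _; exact Finset.mem_range.2 (ZMod.val_lt a)
      · intro a ha; exact ZMod.val_cast_of_lt (Finset.mem_range.1 ha)
      · intro a _; exact ZMod.natCast_rightInverse a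
      · intro a _; rfl
    rw [e1]
    have hcard : Fintype.card (ZMod ℓ) = ℓ := ZMod.card ℓ
    have := FiniteField.sum_pow_lt_card_sub_one (K := ZMod ℓ) n (by omega)
    exact this

lemma small_cyclo : Bd ℓ (ℓ : ℝ)⁻¹ (ℓ - 2)
    ((Polynomial.cyclotomic ℓ ℤ).eval₂ (Int.castRingHom (PowerSeries ℚ)) (PowerSeries.exp ℚ)) := by
  intro n hn
  have hℓ2 : 2 ≤ ℓ := hF.out.two_le
  rw [Polynomial.cyclotomic_prime ℤ ℓ, Polynomial.eval₂_finset_sum]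
  have e1 : ∀ i : ℕ, (Polynomial.X ^ i : Polynomial ℤ).eval₂
      (Int.castRingHom (PowerSeries ℚ)) (PowerSeries.exp ℚ) = rescale (i : ℚ) (exp ℚ) := by
    intro i
    rw [Polynomial.eval₂_X_pow, exp_pow_eq_rescale_exp]
  simp only [e1]
  rw [map_sum]
  have e2 : ∀ i : ℕ, (coeff n) (rescale (i : ℚ) (exp ℚ))
      = (i : ℚ) ^ n * (n.factorial : ℚ)⁻¹ := by
    intro i
    rw [coeff_rescale, coeff_exp]
    simp [one_div]
  simp only [e2]
  rw [← Finset.sum_mul]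
  have e3 : (∑ i ∈ Finset.range ℓ, (i : ℚ) ^ n) = ((∑ i ∈ Finset.range ℓ, (i : ℤ) ^ n : ℤ) : ℚ) := by
    push_cast; rfl
  rw [e3]
  push_cast
  rw [norm_mul, norm_inv]
  have h1 : ‖(∑ i ∈ Finset.range ℓ, (i : ℚ_[ℓ]) ^ n)‖ ≤ (ℓ : ℝ)⁻¹ := by
    have := norm_intQ_le_inv (ℓ := ℓ) (dvd_power_sum hn)
    push_cast at this
    exact this
  have h2 : ‖((n.factorial : ℕ) : ℚ_[ℓ])‖ = 1 := norm_factQ_eq_one (by omega)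
  push_cast at h2
  rw [h2, inv_one, mul_one]
  exact h1

-- rescale lemmas
lemma derivative_rescale (a : ℚ) (A : PowerSeries ℚ) :
    PowerSeries.derivative ℚ (rescale a A) =
      PowerSeries.C a * rescale a (PowerSeries.derivative ℚ A) := by
  ext n
  rw [PowerSeries.coeff_derivative, coeff_rescale, PowerSeries.coeff_C_mul, coeff_rescale,
    PowerSeries.coeff_derivative, pow_succ]
  ring

lemma inv_rescale {a : ℚ} (ha : a ≠ 0) {A : PowerSeries ℚ}
    (hA : PowerSeries.constantCoeff A ≠ 0) :
    (rescale a A)⁻¹ = rescale a A⁻¹ := by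
  have h0 : PowerSeries.constantCoeff (rescale a A) = PowerSeries.constantCoeff A := by
    rw [← PowerSeries.coeff_zero_eq_constantCoeff, coeff_rescale]
    simp
  symm
  rw [PowerSeries.eq_inv_iff_mul_eq_one (by rwa [h0])]
  rw [← map_mul, PowerSeries.inv_mul_cancel _ hA, map_one]

lemma ratModCong_of_norm {x : ℚ} (h : ‖(x : ℚ_[ℓ])‖ ≤ (ℓ : ℝ)⁻¹) : _root_.RatModCong ℓ x := by
  have hℓ2 : 2 ≤ ℓ := hF.out.two_le
  have hdenQ : ((x.den : ℚ)) ≠ 0 := Nat.cast_ne_zero.2 x.den_nz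
  have hx : (x.den : ℚ) * x = (x.num : ℚ) := by
    rw [mul_comm, ← eq_div_iff hdenQ]
    exact (Rat.num_div_den x).symm
  have hnum : (ℓ : ℤ) ∣ x.num := by
    rw [← Padic.norm_intCast_lt_one_iff]
    have hcast : ((x.num : ℚ_[ℓ])) = ((x.den : ℚ_[ℓ])) * (x : ℚ_[ℓ]) := by
      have := congrArg (fun y : ℚ => (y : ℚ_[ℓ])) hx
      push_cast at this ⊢
      exact this.symm
    rw [hcast, norm_mul]
    calc ‖((x.den : ℚ_[ℓ]))‖ * ‖(x : ℚ_[ℓ])‖ ≤ 1 * (ℓ : ℝ)⁻¹ := by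
          refine mul_le_mul ?_ h (norm_nonneg _) zero_le_one
          exact_mod_cast Padic.norm_int_le_one (p := ℓ) (x.den : ℤ)
      _ < 1 := by
          rw [one_mul]
          rw [inv_lt_one_iff₀]
          right
          exact_mod_cast by omega
  have hden : ¬ (ℓ : ℤ) ∣ (x.den : ℤ) := by
    intro hd
    have h1 : ℓ ∣ x.num.natAbs := Int.natCast_dvd_natCast.1 (Int.dvd_natAbs.2 hnum)
    have h2 : ℓ ∣ x.den := Int.natCast_dvd_natCast.1 hd
    have := Nat.dvd_gcd h1 h2
    rw [x.reduced] at this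
    have := Nat.dvd_one.1 this
    omega
  obtain ⟨k, hk⟩ := hnum
  refine ⟨k, x.den, hden, ?_⟩
  push_cast
  rw [hx, hk]
  push_cast
  ring


end KummerAux

/-- Kummer's differential logarithms vanish on real elements for odd `r`:
if `α = f(ζ) ∈ ℤ[ζ]` is fixed by complex conjugation and `α ≡ 1 mod (1 − ζ)`, then
`ℒ^r(α) ≡ 0 (mod ℓ)` for every odd `r` with `1 ≤ r ≤ ℓ − 2`. -/
theorem kummerL_real_vanishes (ℓ : ℕ) (hℓ : ℓ.Prime) (hodd : ℓ ≠ 2)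
    (ζ : ℂ) (hζ : IsPrimitiveRoot ζ ℓ)
    (f : Polynomial ℤ) (hf1 : Polynomial.eval 1 f ≠ 0)
    (hfcong : ∃ u : Polynomial ℤ,
      Polynomial.aeval ζ f - 1 = (1 - ζ) * Polynomial.aeval ζ u)
    (hreal : (starRingEnd ℂ) (Polynomial.aeval ζ f) = Polynomial.aeval ζ f)
    (r : ℕ) (hrodd : Odd r) (hr1 : 1 ≤ r) (hr2 : r ≤ ℓ - 2) :
    RatModCong ℓ (kummerL f r) := by
  haveI : Fact ℓ.Prime := ⟨hℓ⟩
  have hℓ2 : 2 ≤ ℓ := hℓ.two_le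
  have hℓ3 : 3 ≤ ℓ := by omega
  have hℓpos : 0 < ℓ := by omega
  set c : ℕ := ℓ - 1 with hcdef
  -- complex conjugation is ζ ↦ ζ ^ c on ζ
  have hζℓ : ζ ^ ℓ = 1 := hζ.pow_eq_one
  have hζ0 : ζ ≠ 0 := hζ.ne_zero (by omega)
  have habs : Complex.normSq ζ = 1 := by
    have h2 : ‖ζ‖ = 1 := Complex.norm_eq_one_of_pow_eq_one hζℓ (by omega)
    rw [Complex.normSq_eq_norm_sq, h2]
    norm_num
  have hconj : (starRingEnd ℂ) ζ = ζ ^ c := by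
    have h1 : (starRingEnd ℂ) ζ * ζ = 1 := by
      rw [mul_comm, Complex.mul_conj, habs]; norm_num
    have h2 : ζ ^ c * ζ = 1 := by
      rw [← pow_succ, show c + 1 = ℓ by omega, hζℓ]
    exact mul_right_cancel₀ hζ0 (h1.trans h2.symm)
  have haev : ∀ p : Polynomial ℤ,
      (starRingEnd ℂ) (Polynomial.aeval ζ p) = Polynomial.aeval ((starRingEnd ℂ) ζ) p := by
    intro p
    rw [Polynomial.aeval_def, Polynomial.aeval_def, Polynomial.hom_eval₂]
    congr 1
    exact RingHom.ext_int _ _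
  set F : Polynomial ℤ := f.comp (Polynomial.X ^ c) with hFdef
  have hFζ : Polynomial.aeval ζ F = Polynomial.aeval ζ f := by
    rw [hFdef, Polynomial.aeval_comp, map_pow, Polynomial.aeval_X, ← hconj, ← haev, hreal]
  have key : ∀ p : Polynomial ℤ, Polynomial.aeval ζ p = 0 →
      ∃ v : Polynomial ℤ, p = Polynomial.cyclotomic ℓ ℤ * v := by
    intro p hp
    have : Polynomial.cyclotomic ℓ ℤ ∣ p := by
      rw [Polynomial.cyclotomic_eq_minpoly hζ hℓpos]
      exact minpoly.isIntegrallyClosed_dvd (hζ.isIntegral hℓpos) hp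
    exact this
  obtain ⟨q, hq⟩ := key (F - f) (by rw [map_sub, hFζ, sub_self])
  obtain ⟨u, hu⟩ := hfcong
  obtain ⟨w, hw⟩ := key (f - 1 - (1 - Polynomial.X) * u) (by
    simp only [map_sub, map_mul, map_one, Polynomial.aeval_X]
    linear_combination hu)
  have heval1 : f.eval 1 - 1 = (ℓ : ℤ) * w.eval 1 := by
    have hev := congrArg (Polynomial.eval 1) hw
    simp only [Polynomial.eval_sub, Polynomial.eval_mul, Polynomial.eval_one, Polynomial.eval_X,
      Polynomial.eval_one_cyclotomic_prime, sub_self, zero_mul, sub_zero] at hev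
    exact hev
  have hf1u : ¬ (ℓ : ℤ) ∣ f.eval 1 := by
    rintro ⟨k, hk⟩
    have hdvd1 : (ℓ : ℤ) ∣ 1 := ⟨k - w.eval 1, by rw [mul_sub, ← hk]; linarith⟩
    have := Int.le_of_dvd one_pos hdvd1
    omega
  -- power series
  set E : PowerSeries ℚ := PowerSeries.exp ℚ with hEdef
  set g : PowerSeries ℚ := f.eval₂ (Int.castRingHom (PowerSeries ℚ)) E with hgdef
  set G : PowerSeries ℚ := F.eval₂ (Int.castRingHom (PowerSeries ℚ)) E with hGdef
  set φ : PowerSeries ℚ :=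
    (Polynomial.cyclotomic ℓ ℤ).eval₂ (Int.castRingHom (PowerSeries ℚ)) E with hφdef
  set s : PowerSeries ℚ := φ * q.eval₂ (Int.castRingHom (PowerSeries ℚ)) E with hsdef
  have hGg : G = g + s := by
    have hF2 : F = f + Polynomial.cyclotomic ℓ ℤ * q := by linear_combination hq
    rw [hGdef, hF2, Polynomial.eval₂_add, Polynomial.eval₂_mul]
  have hg0 : PowerSeries.constantCoeff g = ((f.eval 1 : ℤ) : ℚ) := by
    rw [hgdef, hEdef, Polynomial.hom_eval₂]
    rw [show ((PowerSeries.constantCoeff : PowerSeries ℚ →+* ℚ).comp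
        (Int.castRingHom (PowerSeries ℚ))) = Int.castRingHom ℚ from RingHom.ext_int _ _]
    rw [PowerSeries.constantCoeff_exp, Polynomial.eval₂_at_one]
    rfl
  have hg0norm : ‖((PowerSeries.constantCoeff g : ℚ) : ℚ_[ℓ])‖ = 1 := by
    rw [hg0]; exact KummerAux.norm_intQ_eq_one hf1u
  have hg0ne : PowerSeries.constantCoeff g ≠ 0 := by
    rw [hg0]; exact_mod_cast hf1
  have hcQ : (c : ℚ) ≠ 0 := Nat.cast_ne_zero.2 (by omega)
  have hGres : G = rescale (c : ℚ) g := by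
    rw [hGdef, hFdef, Polynomial.eval₂_comp, Polynomial.eval₂_X_pow, hEdef,
      exp_pow_eq_rescale_exp, Polynomial.hom_eval₂,
      show ((rescale (c : ℚ)).comp (Int.castRingHom (PowerSeries ℚ)))
        = Int.castRingHom (PowerSeries ℚ) from RingHom.ext_int _ _]
  have hG0 : PowerSeries.constantCoeff G = PowerSeries.constantCoeff g := by
    rw [hGres, ← PowerSeries.coeff_zero_eq_constantCoeff, coeff_rescale]
    simp
  have hG0ne : PowerSeries.constantCoeff G ≠ 0 := by rw [hG0]; exact hg0ne
  -- bounds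
  set M : ℕ := r - 1 with hMdef
  have hMr : M + 1 = r := by omega
  have hM2 : M + 1 ≤ ℓ - 2 := by omega
  have hMℓ : M + 1 < ℓ := by omega
  have Bg : KummerAux.Bd ℓ 1 (M + 1) g := KummerAux.Bd_eval f hMℓ
  have BG : KummerAux.Bd ℓ 1 (M + 1) G := KummerAux.Bd_eval F hMℓ
  have Bq : KummerAux.Bd ℓ 1 (M + 1) (q.eval₂ (Int.castRingHom (PowerSeries ℚ)) E) :=
    KummerAux.Bd_eval q hMℓ
  have Bφ : KummerAux.Bd ℓ (ℓ : ℝ)⁻¹ (M + 1) φ :=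
    KummerAux.small_cyclo.mono le_rfl hM2
  have Bs : KummerAux.Bd ℓ (ℓ : ℝ)⁻¹ (M + 1) s := by
    have := Bφ.mul (d := 1) zero_le_one Bq
    rwa [mul_one] at this
  have Bs' : KummerAux.Bd ℓ (ℓ : ℝ)⁻¹ M (PowerSeries.derivative ℚ s) := KummerAux.Bd_deriv Bs
  have Bg' : KummerAux.Bd ℓ 1 M (PowerSeries.derivative ℚ g) := KummerAux.Bd_deriv Bg
  have Bginv : KummerAux.Bd ℓ 1 M g⁻¹ :=
    KummerAux.Bd_inv (Bg.mono le_rfl (by omega)) hg0norm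
  have BGinv : KummerAux.Bd ℓ 1 M G⁻¹ := by
    refine KummerAux.Bd_inv (BG.mono le_rfl (by omega)) ?_
    rw [hG0]; exact hg0norm
  set T : PowerSeries ℚ :=
    PowerSeries.derivative ℚ s * g - PowerSeries.derivative ℚ g * s with hTdef
  have BT : KummerAux.Bd ℓ (ℓ : ℝ)⁻¹ M T := by
    have h1 := Bs'.mul (d := 1) zero_le_one (Bg.mono le_rfl (by omega))
    have h2 := Bg'.mul (d := (ℓ : ℝ)⁻¹) (by positivity) (Bs.mono le_rfl (by omega))
    rw [mul_one] at h1
    rw [one_mul] at h2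
    exact h1.sub h2
  have Btot : KummerAux.Bd ℓ (ℓ : ℝ)⁻¹ M (T * (g⁻¹ * G⁻¹)) := by
    have hinv : KummerAux.Bd ℓ 1 M (g⁻¹ * G⁻¹) := by
      have := Bginv.mul (d := 1) zero_le_one BGinv
      rwa [mul_one] at this
    have := BT.mul (d := 1) zero_le_one hinv
    rwa [mul_one] at this
  -- algebraic identity for the difference of log derivatives
  have h1 : g * g⁻¹ = 1 := PowerSeries.mul_inv_cancel _ hg0ne
  have h2 : G * G⁻¹ = 1 := PowerSeries.mul_inv_cancel _ hG0ne
  have hG' : PowerSeries.derivative ℚ G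
      = PowerSeries.derivative ℚ g + PowerSeries.derivative ℚ s := by
    rw [hGg, map_add]
  have hD : PowerSeries.derivative ℚ G * G⁻¹ - PowerSeries.derivative ℚ g * g⁻¹
      = T * (g⁻¹ * G⁻¹) := by
    calc PowerSeries.derivative ℚ G * G⁻¹ - PowerSeries.derivative ℚ g * g⁻¹
        = PowerSeries.derivative ℚ G * G⁻¹ * (g * g⁻¹)
          - PowerSeries.derivative ℚ g * g⁻¹ * (G * G⁻¹) := by
          rw [h1, h2, mul_one, mul_one]
      _ = (PowerSeries.derivative ℚ G * g - PowerSeries.derivative ℚ g * G) * (g⁻¹ * G⁻¹) := by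
          ring
      _ = T * (g⁻¹ * G⁻¹) := by rw [hG', hGg, hTdef]; ring
  -- rescale identity
  have hscale : PowerSeries.coeff M (PowerSeries.derivative ℚ G * G⁻¹)
      = (c : ℚ) ^ r * PowerSeries.coeff M (PowerSeries.derivative ℚ g * g⁻¹) := by
    rw [hGres, KummerAux.derivative_rescale, KummerAux.inv_rescale hcQ hg0ne,
      mul_assoc, ← map_mul, PowerSeries.coeff_C_mul, coeff_rescale, ← mul_assoc,
      ← pow_succ', hMr]
  -- put everything together
  set X : ℚ := PowerSeries.coeff M (PowerSeries.derivative ℚ g * g⁻¹) with hXdef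
  have hdiff : ((c : ℚ) ^ r - 1) * X
      = PowerSeries.coeff M (T * (g⁻¹ * G⁻¹)) := by
    rw [← hD, map_sub, hscale, hXdef]
    ring
  have hnorm1 : ‖((((c : ℚ) ^ r - 1) * X : ℚ) : ℚ_[ℓ])‖ ≤ (ℓ : ℝ)⁻¹ := by
    rw [hdiff]
    exact Btot M le_rfl
  have hunit : ¬ (ℓ : ℤ) ∣ ((c : ℤ) ^ r - 1) := by
    intro hd
    have hd2 : (ℓ : ℤ) ∣ ((c : ℤ) ^ r + 1) := by
      have hpow := Odd.add_dvd_pow_add_pow (c : ℤ) 1 hrodd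
      rw [one_pow] at hpow
      have hcℓ : ((c : ℤ) + 1) = (ℓ : ℤ) := by
        rw [hcdef]
        push_cast [Nat.cast_sub (by omega : 1 ≤ ℓ)]
        ring
      rwa [hcℓ] at hpow
    have hdvd2 : (ℓ : ℤ) ∣ 2 := by
      have := dvd_sub hd2 hd
      simpa using this
    have := Int.le_of_dvd (by norm_num) hdvd2
    omega
  have hcrnorm : ‖((((c : ℚ) ^ r - 1) : ℚ) : ℚ_[ℓ])‖ = 1 := by
    have hcast : (((c : ℚ) ^ r - 1) : ℚ) = (((c : ℤ) ^ r - 1 : ℤ) : ℚ) := by push_cast; ring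
    rw [hcast]
    exact KummerAux.norm_intQ_eq_one hunit
  have hXnorm : ‖((X : ℚ) : ℚ_[ℓ])‖ ≤ (ℓ : ℝ)⁻¹ := by
    have : ‖((((c : ℚ) ^ r - 1) * X : ℚ) : ℚ_[ℓ])‖ = ‖((X : ℚ) : ℚ_[ℓ])‖ := by
      push_cast
      rw [norm_mul]
      have := hcrnorm
      push_cast at this
      rw [this, one_mul]
    rwa [this] at hnorm1
  -- kummerL f r = M! * X
  have hL : kummerL f r = ((M.factorial : ℚ)) * X := rfl
  have hfinal : ‖((kummerL f r : ℚ) : ℚ_[ℓ])‖ ≤ (ℓ : ℝ)⁻¹ := by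
    rw [hL]
    push_cast
    rw [norm_mul]
    have hf : ‖((M.factorial : ℚ_[ℓ]))‖ = 1 := by
      have := KummerAux.norm_factQ_eq_one (ℓ := ℓ) (n := M) (by omega)
      push_cast at this
      exact this
    rw [hf, one_mul]
    have := hXnorm
    push_cast at this
    exact this
  exact KummerAux.ratModCong_of_norm hfinal
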